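/- Let $A$ be a commutative ring with $1/2 \in A$, $M \subseteq A$ an archimedean quadratic module, and $I$ a finitely generated ideal of $A$. Then $(I^2, M \cap I^2)$ has an order unit. More precisely, if $I = (b_1, \ldots, b_m)$, then $u = b_1^2 + \cdots + b_m^2$ is an order unit of $(I^2, M \cap I^2)$. -/

import Mathlib

/-- If `1/2 ∈ A`, `M` is an archimedean quadratic module in `A` and
`I = (b₁, …, b_m)` is a finitely generated ideal, then `(I², M ∩ I²)` has an order
unit; more precisely `u = b₁² + ⋯ + b_m²` is such an order unit. -/
theorem orderUnit_sq_ideal {A : Type*} [CommRing A]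
    (half : A) (hhalf : 2 * half = 1) (M : Set A)
    (hM0 : (0 : A) ∈ M) (hM1 : (1 : A) ∈ M)
    (hMadd : ∀ x ∈ M, ∀ y ∈ M, x + y ∈ M)
    (hsq : ∀ a : A, ∀ m ∈ M, a ^ 2 * m ∈ M)
    (harch : ∀ a : A, ∃ n : ℕ, (n : A) - a ∈ M)
    (m : ℕ) (b : Fin m → A) :
    (∑ i, b i ^ 2) ∈ M ∩ ((Ideal.span (Set.range b)) ^ 2 : Ideal A) ∧
    ∀ x ∈ (Ideal.span (Set.range b)) ^ 2,
      ∃ y ∈ M ∩ ((Ideal.span (Set.range b)) ^ 2 : Ideal A),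
        ∃ k : ℤ, x = y + k • (∑ i, b i ^ 2) := by
  set I : Ideal A := Ideal.span (Set.range b) with hI
  set u : A := ∑ i, b i ^ 2 with hu
  have hsqM : ∀ a : A, a ^ 2 ∈ M := fun a => by simpa using hsq a 1 hM1
  have h2mul : ∀ x ∈ M, 2 * x ∈ M := by
    intro x hx
    have := hMadd x hx x hx
    convert this using 1; ring
  have hnmul : ∀ n : ℕ, ∀ x ∈ M, (n : A) * x ∈ M := by
    intro n
    induction n with
    | zero => intro x _; simpa using hM0
    | succ k ih =>
      intro x hx
      have := hMadd _ (ih x hx) x hx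
      convert this using 1; push_cast; ring
  have hsumM : ∀ (s : Finset (Fin m)) (f : Fin m → A),
      (∀ i ∈ s, f i ∈ M) → ∑ i ∈ s, f i ∈ M := by
    intro s
    induction s using Finset.induction with
    | empty => intro f _; simpa using hM0
    | insert _ _ hnot ih =>
      intro f hf
      rw [Finset.sum_insert hnot]
      exact hMadd _ (hf _ (Finset.mem_insert_self _ _)) _
        (ih f fun i hi => hf i (Finset.mem_insert_of_mem hi))
  have hbI : ∀ i, b i ∈ I := fun i => Ideal.subset_span ⟨i, rfl⟩
  have hJ : ∀ i j, b i * b j ∈ I ^ 2 := fun i j => by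
    rw [pow_two]; exact Ideal.mul_mem_mul (hbI i) (hbI j)
  have huJ : u ∈ I ^ 2 := by
    rw [hu]
    exact Submodule.sum_mem _ fun i _ => by simpa [pow_two] using hJ i i
  have huM : u ∈ M := hsumM _ _ fun i _ => hsqM (b i)
  have hrem : ∀ i : Fin m, u - b i ^ 2 ∈ M := by
    intro i
    have h : u - b i ^ 2 = ∑ j ∈ Finset.univ.erase i, b j ^ 2 := by
      rw [hu, ← Finset.add_sum_erase Finset.univ (fun j => b j ^ 2) (Finset.mem_univ i)]
      ring
    rw [h]
    exact hsumM _ _ fun j _ => hsqM (b j)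
  have h4 : half ^ 2 * 4 = 1 := by linear_combination (2 * half + 1) * hhalf
  have hkey : ∀ (a : A) (i j : Fin m), ∃ n : ℕ, a * (b i * b j) + (n : A) * u ∈ M := by
    intro a i j
    obtain ⟨n₁, h₁⟩ := harch a
    obtain ⟨n₂, h₂⟩ := harch (-a)
    refine ⟨n₁ + n₂, ?_⟩
    have hW : (b i + b j) ^ 2 * ((n₂ : A) - -a) ∈ M := hsq _ _ h₂
    have hB1 : (b i - b j) ^ 2 + (2 * (u - b i ^ 2) + 2 * (u - b j ^ 2)) ∈ M :=
      hMadd _ (hsqM _) _ (hMadd _ (h2mul _ (hrem i)) _ (h2mul _ (hrem j)))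
    have hX : (n₂ : A) * ((b i - b j) ^ 2 + (2 * (u - b i ^ 2) + 2 * (u - b j ^ 2))) ∈ M :=
      hnmul n₂ _ hB1
    have hY : (b i - b j) ^ 2 * ((n₁ : A) - a) ∈ M := hsq _ _ h₁
    have hB2 : (b i + b j) ^ 2 + (2 * (u - b i ^ 2) + 2 * (u - b j ^ 2)) ∈ M :=
      hMadd _ (hsqM _) _ (hMadd _ (h2mul _ (hrem i)) _ (h2mul _ (hrem j)))
    have hZ : (n₁ : A) * ((b i + b j) ^ 2 + (2 * (u - b i ^ 2) + 2 * (u - b j ^ 2))) ∈ M :=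
      hnmul n₁ _ hB2
    have hS := hMadd _ (hMadd _ hW _ hX) _ (hMadd _ hY _ hZ)
    have hfin := hsq half _ hS
    convert hfin using 1
    push_cast
    linear_combination (-(a * (b i * b j) + ((n₁ : A) + (n₂ : A)) * u)) * h4
  have Padd : ∀ x y : A, (∃ n : ℕ, x + (n : A) * u ∈ M) → (∃ n : ℕ, y + (n : A) * u ∈ M) →
      ∃ n : ℕ, (x + y) + (n : A) * u ∈ M := by
    rintro x y ⟨n, hn⟩ ⟨n', hn'⟩
    refine ⟨n + n', ?_⟩
    have := hMadd _ hn _ hn'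
    convert this using 1; push_cast; ring
  have Psum : ∀ (s : Finset (Fin m)) (f : Fin m → A),
      (∀ i ∈ s, ∃ n : ℕ, f i + (n : A) * u ∈ M) →
      ∃ n : ℕ, (∑ i ∈ s, f i) + (n : A) * u ∈ M := by
    intro s
    induction s using Finset.induction with
    | empty => intro f _; exact ⟨0, by simpa using hM0⟩
    | insert _ _ hnot ih =>
      intro f hf
      rw [Finset.sum_insert hnot]
      exact Padd _ _ (hf _ (Finset.mem_insert_self _ _))
        (ih f fun i hi => hf i (Finset.mem_insert_of_mem hi))
  refine ⟨⟨huM, huJ⟩, ?_⟩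
  intro x hx
  have hxP : ∃ n : ℕ, x + (n : A) * u ∈ M := by
    have hx' := hx
    rw [pow_two] at hx'
    refine Submodule.mul_induction_on hx' ?_ ?_
    · intro p hp q hq
      obtain ⟨c, hc⟩ := (Submodule.mem_span_range_iff_exists_fun A).mp hp
      obtain ⟨e, he⟩ := (Submodule.mem_span_range_iff_exists_fun A).mp hq
      have hpq : p * q = ∑ i, ∑ j, (c i * e j) * (b i * b j) := by
        rw [← hc, ← he, Finset.sum_mul_sum]
        refine Finset.sum_congr rfl fun i _ => Finset.sum_congr rfl fun j _ => ?_
        simp [smul_eq_mul]; ring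
      rw [hpq]
      exact Psum _ _ fun i _ => Psum _ _ fun j _ => hkey (c i * e j) i j
    · intro p q hp hq
      exact Padd _ _ hp hq
  obtain ⟨n, hn⟩ := hxP
  refine ⟨x + (n : A) * u, ⟨hn, add_mem hx (Ideal.mul_mem_left _ _ huJ)⟩, -(n : ℤ), ?_⟩
  rw [zsmul_eq_mul]
  push_cast
  ring
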